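/- For a ring R, the map θ ↦ M_n(θ,R) preserves binary suprema: for preorders θ₁, θ₂ on Fin n, the subring of Matrix (Fin n) (Fin n) R generated by M_n(θ₁,R) ∪ M_n(θ₂,R) equals M_n(θ₁ ⊔ θ₂, R), where θ₁ ⊔ θ₂ is the transitive closure of the union of θ₁ and θ₂. -/

import Mathlib

open Matrix

theorem structural_matrix_ring_sup
    (R : Type*) [Ring R] (n : ℕ) (hn : 1 ≤ n)
    (θ₁ θ₂ : Fin n → Fin n → Prop)
    (h₁r : Reflexive θ₁) (h₁t : Transitive θ₁)
    (h₂r : Reflexive θ₂) (h₂t : Transitive θ₂) :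
    (Subring.closure
        ({A : Matrix (Fin n) (Fin n) R | ∀ i j, A i j ≠ 0 → θ₁ i j} ∪
          {A : Matrix (Fin n) (Fin n) R | ∀ i j, A i j ≠ 0 → θ₂ i j}) :
        Set (Matrix (Fin n) (Fin n) R)) =
      {A : Matrix (Fin n) (Fin n) R |
        ∀ i j, A i j ≠ 0 → Relation.TransGen (fun a b => θ₁ a b ∨ θ₂ a b) i j} := by
  set θ : Fin n → Fin n → Prop := fun a b => θ₁ a b ∨ θ₂ a b with hθ
  set U : Set (Matrix (Fin n) (Fin n) R) :=
    ({A : Matrix (Fin n) (Fin n) R | ∀ i j, A i j ≠ 0 → θ₁ i j} ∪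
      {A : Matrix (Fin n) (Fin n) R | ∀ i j, A i j ≠ 0 → θ₂ i j}) with hU
  let S : Subring (Matrix (Fin n) (Fin n) R) :=
  { carrier := {A | ∀ i j, A i j ≠ 0 → Relation.TransGen θ i j}
    zero_mem' := by intro i j h; simp at h
    one_mem' := by
      intro i j h
      by_cases hij : i = j
      · subst hij; exact Relation.TransGen.single (Or.inl (h₁r i))
      · simp [Matrix.one_apply_ne hij] at h
    add_mem' := by
      intro a b ha hb i j h
      by_cases h1 : a i j ≠ 0
      · exact ha i j h1
      · push_neg at h1
        apply hb i j
        intro h2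
        apply h
        simp [Matrix.add_apply, h1, h2]
    neg_mem' := by
      intro a ha i j h
      apply ha i j
      simpa using h
    mul_mem' := by
      intro a b ha hb i j h
      have : ∃ k, a i k * b k j ≠ 0 := by
        by_contra hc
        push_neg at hc
        apply h
        rw [Matrix.mul_apply]
        exact Finset.sum_eq_zero fun k _ => hc k
      obtain ⟨k, hk⟩ := this
      exact (ha i k (left_ne_zero_of_mul hk)).trans (hb k j (right_ne_zero_of_mul hk)) }
  apply le_antisymm
  · have : Subring.closure U ≤ S := by
      apply Subring.closure_le.mpr
      rintro A (hA | hA) i j h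
      · exact Relation.TransGen.single (Or.inl (hA i j h))
      · exact Relation.TransGen.single (Or.inr (hA i j h))
    exact this
  · intro A hA
    have key : ∀ (i j : Fin n) (c : R), Relation.TransGen θ i j →
        Matrix.single i j c ∈ Subring.closure U := by
      intro i j c h
      induction h with
      | single hstep =>
        apply Subring.subset_closure
        rcases hstep with h | h
        · left
          intro a b hab
          rw [Matrix.single] at hab
          simp only [Matrix.of_apply] at hab
          split_ifs at hab with hcond
          · obtain ⟨rfl, rfl⟩ := hcond; exact h
          · exact absurd rfl hab
        · right
          intro a b hab
          rw [Matrix.single] at hab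
          simp only [Matrix.of_apply] at hab
          split_ifs at hab with hcond
          · obtain ⟨rfl, rfl⟩ := hcond; exact h
          · exact absurd rfl hab
      | tail _ hstep ih =>
        rename_i k j' _
        have heq : Matrix.single i j' c =
            Matrix.single i k c * Matrix.single k j' (1 : R) := by
          rw [Matrix.single_mul_single_same, mul_one]
        rw [heq]
        apply Subring.mul_mem _ ih
        apply Subring.subset_closure
        rcases hstep with h | h
        · left
          intro a b hab
          rw [Matrix.single] at hab
          simp only [Matrix.of_apply] at hab
          split_ifs at hab with hcond
          · obtain ⟨rfl, rfl⟩ := hcond; exact h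
          · exact absurd rfl hab
        · right
          intro a b hab
          rw [Matrix.single] at hab
          simp only [Matrix.of_apply] at hab
          split_ifs at hab with hcond
          · obtain ⟨rfl, rfl⟩ := hcond; exact h
          · exact absurd rfl hab
    have hrep : A = ∑ i : Fin n, ∑ j : Fin n, Matrix.single i j (A i j) :=
      Matrix.matrix_eq_sum_single A
    rw [hrep]
    apply Subring.sum_mem
    intro i _
    apply Subring.sum_mem
    intro j _
    by_cases hz : A i j = 0
    · rw [hz]
      simpa using Subring.zero_mem (Subring.closure U)
    · exact key i j (A i j) (hA i j hz)
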